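/- Let G be a graph with a perfect matching M. An edge subset S ⊆ M is a forcing set of M if and only if S contains at least one edge of every M-alternating cycle of G. -/

import Mathlib

open SimpleGraph

variable {V : Type*}

/-- `M` is a perfect matching of `G`, viewed as a set of edges. -/
def IsPM (G : SimpleGraph V) (M : Set (Sym2 V)) : Prop :=
  M ⊆ G.edgeSet ∧ ∀ v : V, ∃! e, e ∈ M ∧ v ∈ e

/-- `G` has a perfect matching. -/
def HasPM (G : SimpleGraph V) : Prop := ∃ M, IsPM G M

/-- `c` is an `M`-alternating cycle of `G`: a cycle in which every vertex of the
cycle lies on exactly one edge of the cycle belonging to `M`. -/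
def IsAltCycle (G : SimpleGraph V) (M : Set (Sym2 V)) {v : V} (c : G.Walk v v) : Prop :=
  c.IsCycle ∧ ∀ w ∈ c.support, ∃! e, e ∈ c.edges ∧ e ∈ M ∧ w ∈ e

/-- `S` is a forcing set of the perfect matching `M` of `G`. -/
def IsForcingSet (G : SimpleGraph V) (M S : Set (Sym2 V)) : Prop :=
  S ⊆ M ∧ ∀ M', IsPM G M' → S ⊆ M' → M' = M

/-- `S ⊆ E(G) \ M` is an anti-forcing set of `M`: `G - S` has a unique perfect matching. -/
def IsAntiForcingSet (G : SimpleGraph V) (M S : Set (Sym2 V)) : Prop :=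
  S ⊆ G.edgeSet \ M ∧ ∃! M', IsPM (G.deleteEdges S) M'

/-- `S` is a global forcing set of `G`. -/
def IsGFS (G : SimpleGraph V) (S : Set (Sym2 V)) : Prop :=
  S ⊆ G.edgeSet ∧ ∀ M M', IsPM G M → IsPM G M' → M ∩ S = M' ∩ S → M = M'

/-- `G` has a perfect matching avoiding the vertex set `A`, i.e. `G - A` has a p.m. -/
def PMAvoiding (G : SimpleGraph V) (A : Set V) : Prop :=
  ∃ M, M ⊆ G.edgeSet ∧ (∀ e ∈ M, ∀ v, v ∈ e → v ∉ A) ∧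
    ∀ v, v ∉ A → ∃! e, e ∈ M ∧ v ∈ e

/-- `c` is a nice cycle of `G`: `G - V(c)` has a perfect matching. -/
def IsNiceCycle (G : SimpleGraph V) {v : V} (c : G.Walk v v) : Prop :=
  c.IsCycle ∧ PMAvoiding G {w | w ∈ c.support}

/-- The global forcing number. -/
noncomputable def gf (G : SimpleGraph V) : ℕ :=
  sInf {k | ∃ S, IsGFS G S ∧ S.ncard = k}

/-- The anti-forcing number of a perfect matching `M`. -/
noncomputable def af (G : SimpleGraph V) (M : Set (Sym2 V)) : ℕ :=
  sInf {k | ∃ S, IsAntiForcingSet G M S ∧ S.ncard = k}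

/-- The maximum anti-forcing number. -/
noncomputable def Af (G : SimpleGraph V) : ℕ :=
  sSup {k | ∃ M, IsPM G M ∧ af G M = k}

/-- The forcing number of a perfect matching `M`. -/
noncomputable def fnum (G : SimpleGraph V) (M : Set (Sym2 V)) : ℕ :=
  sInf {k | ∃ S, IsForcingSet G M S ∧ S.ncard = k}

/-- The maximum forcing number. -/
noncomputable def Fnum (G : SimpleGraph V) : ℕ :=
  sSup {k | ∃ M, IsPM G M ∧ fnum G M = k}


namespace ForcingAux

variable {G : SimpleGraph V} {M M' : Set (Sym2 V)}

noncomputable def partner (hM : IsPM G M) (v : V) : V :=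
  Sym2.Mem.other (hM.2 v).exists.choose_spec.2

lemma partner_mem (hM : IsPM G M) (v : V) : s(v, partner hM v) ∈ M := by
  rw [partner, Sym2.other_spec]
  exact (hM.2 v).exists.choose_spec.1

lemma partner_eq (hM : IsPM G M) {v w : V} (h : s(v, w) ∈ M) : partner hM v = w := by
  obtain ⟨e, -, hu⟩ := hM.2 v
  have h1 := hu _ ⟨partner_mem hM v, Sym2.mem_mk_left _ _⟩
  have h2 := hu _ ⟨h, Sym2.mem_mk_left _ _⟩
  exact Sym2.congr_right.mp (h1.trans h2.symm)

lemma adj_partner (hM : IsPM G M) (v : V) : G.Adj v (partner hM v) :=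
  (G.mem_edgeSet).mp (hM.1 (partner_mem hM v))

lemma partner_ne (hM : IsPM G M) (v : V) : partner hM v ≠ v :=
  (adj_partner hM v).ne'

lemma partner_partner (hM : IsPM G M) (v : V) : partner hM (partner hM v) = v := by
  have := partner_mem hM v
  rw [Sym2.eq_swap] at this
  exact partner_eq hM this

lemma partner_injective (hM : IsPM G M) : Function.Injective (partner hM) :=
  Function.Involutive.injective (partner_partner hM)

/-- In a nonnil path, there is a unique edge containing the final vertex. -/
lemma path_last_edge {a b : V} (p : G.Walk a b) (hp : p.IsPath) (hnil : ¬ p.Nil) :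
    ∃! e, e ∈ p.edges ∧ b ∈ e := by
  induction p with
  | nil => simp at hnil
  | @cons a a' b h q ih =>
    have hq : q.IsPath := hp.of_cons
    have hans : a ∉ q.support := ((Walk.cons_isPath_iff h q).mp hp).2
    by_cases hqn : q.Nil
    · have hab : a' = b := hqn.eq
      subst hab
      have hqe : q.edges = [] := by
        have h0 : q.edges.length = 0 := by
          rw [q.length_edges, Walk.nil_iff_length_eq.mp hqn]
        exact List.eq_nil_of_length_eq_zero h0
      refine ⟨s(a, a'), ⟨by rw [Walk.edges_cons]; exact List.mem_cons_self,
        Sym2.mem_mk_right _ _⟩, ?_⟩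
      rintro e ⟨he, -⟩
      rw [Walk.edges_cons, hqe] at he
      simpa using he
    · have hba : b ≠ a := fun hba => hans (hba ▸ Walk.end_mem_support _)
      have hba' : b ≠ a' := by
        rintro rfl
        exact hqn (by simp [Walk.isPath_iff_eq_nil.mp hq])
      obtain ⟨e₂, ⟨he₂, hbe₂⟩, hu⟩ := ih hq hqn
      refine ⟨e₂, ⟨by rw [Walk.edges_cons]; exact List.mem_cons_of_mem _ he₂, hbe₂⟩, ?_⟩
      rintro e ⟨he, hbe⟩
      rw [Walk.edges_cons, List.mem_cons] at he
      rcases he with rfl | he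
      · rcases Sym2.mem_iff'.mp hbe with rfl | rfl
        · exact absurd rfl hba
        · exact absurd rfl hba'
      · exact hu e ⟨he, hbe⟩

/-- Each vertex of a cycle lies on exactly two of its edges. -/
lemma cycle_two_edges {v w : V} (c : G.Walk v v) (hc : c.IsCycle) (hw : w ∈ c.support) :
    ∃ e₁ e₂, e₁ ≠ e₂ ∧ e₁ ∈ c.edges ∧ e₂ ∈ c.edges ∧ w ∈ e₁ ∧ w ∈ e₂ ∧
      ∀ e ∈ c.edges, w ∈ e → e = e₁ ∨ e = e₂ := by
  haveI := Classical.decEq V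
  have hmem : ∀ e : Sym2 V, (e ∈ (c.rotate w hw).edges ↔ e ∈ c.edges) :=
    fun e => (c.rotate_edges w hw).mem_iff
  suffices h : ∃ e₁ e₂, e₁ ≠ e₂ ∧ e₁ ∈ (c.rotate w hw).edges ∧ e₂ ∈ (c.rotate w hw).edges ∧
      w ∈ e₁ ∧ w ∈ e₂ ∧ ∀ e ∈ (c.rotate w hw).edges, w ∈ e → e = e₁ ∨ e = e₂ by
    obtain ⟨e₁, e₂, hne, h1, h2, hw1, hw2, hcov⟩ := h
    exact ⟨e₁, e₂, hne, (hmem e₁).mp h1, (hmem e₂).mp h2, hw1, hw2,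
      fun e he hwe => hcov e ((hmem e).mpr he) hwe⟩
  have hc' : (c.rotate w hw).IsCycle := hc.rotate hw
  set c' := c.rotate w hw with hc'def
  clear_value c'
  cases c' with
  | nil => exact absurd hc' (by simp)
  | @cons _ x _ hadj p =>
    obtain ⟨hp, hep⟩ := (Walk.cons_isCycle_iff p hadj).mp hc'
    have hnil : ¬ p.Nil := Walk.not_nil_of_ne hadj.ne'
    obtain ⟨e₂, ⟨he₂, hwe₂⟩, hu⟩ := path_last_edge p hp hnil
    refine ⟨s(w, x), e₂, ?_, by rw [Walk.edges_cons]; exact List.mem_cons_self,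
      by rw [Walk.edges_cons]; exact List.mem_cons_of_mem _ he₂, Sym2.mem_mk_left _ _, hwe₂, ?_⟩
    · rintro rfl; exact hep he₂
    · rintro e he hwe
      rw [Walk.edges_cons, List.mem_cons] at he
      rcases he with rfl | he
      · exact Or.inl rfl
      · exact Or.inr (hu e ⟨he, hwe⟩)

lemma mem_support_of_mem_edges' {a b : V} (p : G.Walk a b) {e : Sym2 V} {w : V}
    (he : e ∈ p.edges) (hwe : w ∈ e) : w ∈ p.support := by
  induction e using Sym2.ind with
  | _ x y =>
    rcases Sym2.mem_iff'.mp hwe with rfl | rfl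
    · exact p.fst_mem_support_of_mem_edges he
    · exact p.snd_mem_support_of_mem_edges he

lemma isPM_symmDiff {v : V} {c : G.Walk v v} (hM : IsPM G M)
    (hc : IsAltCycle G M c) :
    IsPM G ((M \ {e | e ∈ c.edges}) ∪ {e | e ∈ c.edges ∧ e ∉ M}) := by
  constructor
  · rintro e (⟨heM, -⟩ | ⟨hec, -⟩)
    · exact hM.1 heM
    · exact c.edges_subset_edgeSet hec
  · intro u
    by_cases hu : u ∈ c.support
    · obtain ⟨e₁, e₂, hne, h1, h2, hw1, hw2, hcov⟩ := cycle_two_edges c hc.1 hu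
      obtain ⟨eM, ⟨heMc, heMM, heMu⟩, heMuniq⟩ := hc.2 u hu
      have h12 : eM = e₁ ∨ eM = e₂ := hcov eM heMc heMu
      obtain ⟨eN, heNc, heNu, heN12, heNne⟩ :
          ∃ eN, eN ∈ c.edges ∧ u ∈ eN ∧ (∀ e ∈ c.edges, u ∈ e → e = eM ∨ e = eN) ∧ eN ≠ eM := by
        rcases h12 with rfl | rfl
        · exact ⟨e₂, h2, hw2, fun e he hue => hcov e he hue, Ne.symm hne⟩
        · exact ⟨e₁, h1, hw1, fun e he hue => (hcov e he hue).symm, hne⟩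
      have heNM : eN ∉ M := fun hNM => heNne (heMuniq eN ⟨heNc, hNM, heNu⟩)
      refine ⟨eN, ⟨Or.inr ⟨heNc, heNM⟩, heNu⟩, ?_⟩
      rintro e ⟨he, hue⟩
      rcases he with ⟨heM', hec⟩ | ⟨hec, heM'⟩
      · exfalso
        obtain ⟨f, -, hfu⟩ := hM.2 u
        have h1' := hfu e ⟨heM', hue⟩
        have h2' := hfu eM ⟨heMM, heMu⟩
        have he' : e = eM := h1'.trans h2'.symm
        subst he'
        exact hec heMc
      · rcases heN12 e hec hue with rfl | rfl
        · exact absurd heMM heM'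
        · rfl
    · obtain ⟨f, ⟨hfM, hfu⟩, hfuniq⟩ := hM.2 u
      have hfc : f ∉ c.edges := fun h => hu (mem_support_of_mem_edges' c h hfu)
      refine ⟨f, ⟨Or.inl ⟨hfM, hfc⟩, hfu⟩, ?_⟩
      rintro e ⟨he, hue⟩
      rcases he with ⟨heM', hec⟩ | ⟨hec, heM'⟩
      · exact hfuniq e ⟨heM', hue⟩
      · exact absurd (mem_support_of_mem_edges' c hec hue) hu

lemma forcing_hits {S : Set (Sym2 V)} (hM : IsPM G M) (hS : S ⊆ M)
    (hf : IsForcingSet G M S) {v : V} (c : G.Walk v v) (hc : IsAltCycle G M c) :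
    ∃ e ∈ S, e ∈ c.edges := by
  by_contra h
  push_neg at h
  have hPM := isPM_symmDiff hM hc
  have hSM' : S ⊆ (M \ {e | e ∈ c.edges}) ∪ {e | e ∈ c.edges ∧ e ∉ M} :=
    fun e he => Or.inl ⟨hS he, h e he⟩
  have hEq := hf.2 _ hPM hSM'
  obtain ⟨e₁, e₂, hne, h1, h2, hw1, hw2, hcov⟩ :=
    cycle_two_edges c hc.1 (Walk.start_mem_support c)
  obtain ⟨eM, ⟨heMc, heMM, heMu⟩, hu⟩ := hc.2 v (Walk.start_mem_support c)
  have hNM : e₁ ∉ M ∨ e₂ ∉ M := by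
    by_contra hcon
    push_neg at hcon
    exact hne ((hu e₁ ⟨h1, hcon.1, hw1⟩).trans (hu e₂ ⟨h2, hcon.2, hw2⟩).symm)
  rcases hNM with hN | hN
  · exact hN (hEq ▸ (Or.inr ⟨h1, hN⟩ : e₁ ∈ _))
  · exact hN (hEq ▸ (Or.inr ⟨h2, hN⟩ : e₂ ∈ _))

section Backward

noncomputable def wseq (hM : IsPM G M) (hM' : IsPM G M') (v : V) (k : ℕ) : V :=
  (partner hM' ∘ partner hM)^[k] v

noncomputable def yseq (hM : IsPM G M) (hM' : IsPM G M') (v : V) (i : ℕ) : V :=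
  if Even i then wseq hM hM' v (i / 2) else partner hM (wseq hM hM' v (i / 2))

variable (hM : IsPM G M) (hM' : IsPM G M') (v : V)

lemma wseq_succ (k : ℕ) :
    wseq hM hM' v (k + 1) = partner hM' (partner hM (wseq hM hM' v k)) := by
  rw [wseq, Function.iterate_succ_apply']; rfl

lemma yseq_zero : yseq hM hM' v 0 = v := by
  simp [yseq, wseq]

lemma y_even (k : ℕ) : yseq hM hM' v (2 * k) = wseq hM hM' v k := by
  have h1 : Even (2 * k) := even_two_mul k
  have h2 : 2 * k / 2 = k := by omega
  simp [yseq, h1, h2]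

lemma y_odd (k : ℕ) : yseq hM hM' v (2 * k + 1) = partner hM (wseq hM hM' v k) := by
  have h1 : ¬ Even (2 * k + 1) := by rw [Nat.even_iff]; omega
  have h2 : (2 * k + 1) / 2 = k := by omega
  simp [yseq, h1, h2]

lemma yseq_succ_even {i : ℕ} (h : Even i) :
    yseq hM hM' v (i + 1) = partner hM (yseq hM hM' v i) := by
  obtain ⟨k, rfl⟩ := h
  rw [show k + k = 2 * k by ring, y_even, y_odd]

lemma yseq_succ_odd {i : ℕ} (h : Odd i) :
    yseq hM hM' v (i + 1) = partner hM' (yseq hM hM' v i) := by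
  obtain ⟨k, rfl⟩ := h
  rw [show 2 * k + 1 + 1 = 2 * (k + 1) by ring, y_even, y_odd, wseq_succ]

lemma yseq_pred_odd {j : ℕ} (h : Odd (j + 1)) :
    partner hM (yseq hM hM' v (j + 1)) = yseq hM hM' v j := by
  have hj : Even j := by
    rw [Nat.odd_iff] at h
    rw [Nat.even_iff]
    omega
  obtain ⟨k, rfl⟩ := hj
  rw [show k + k = 2 * k by ring, y_odd, partner_partner, y_even]

lemma yseq_pred_even {j : ℕ} (h : Even (j + 1)) :
    partner hM' (yseq hM hM' v (j + 1)) = yseq hM hM' v j := by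
  have hj : Odd j := by
    rw [Nat.even_iff] at h
    rw [Nat.odd_iff]
    omega
  obtain ⟨k, rfl⟩ := hj
  rw [show 2 * k + 1 + 1 = 2 * (k + 1) by ring, y_even, wseq_succ, partner_partner, y_odd]

variable {v}

/-- The M-edges of the alternating walk are not in `M'`. -/
lemma edge_even_notM' (hv : partner hM v ≠ partner hM' v) : ∀ k, s(wseq hM hM' v k, partner hM (wseq hM hM' v k)) ∉ M' := by
  intro k
  induction k with
  | zero =>
    intro hmem
    exact hv (partner_eq hM' hmem ▸ rfl)
  | succ k ih =>
    intro hmem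
    set x := partner hM (wseq hM hM' v k) with hx
    set u := wseq hM hM' v (k + 1) with hudef
    have hu : u = partner hM' x := wseq_succ hM hM' v k
    have h2 : s(u, x) ∈ M' := by
      rw [hu, Sym2.eq_swap]
      exact partner_mem hM' x
    have e1 : partner hM' u = partner hM u := partner_eq hM' hmem
    have e2 : partner hM' u = x := partner_eq hM' h2
    have e3 : partner hM u = x := e1.symm.trans e2
    have e4 : s(x, u) ∈ M := by
      rw [← e3, Sym2.eq_swap]
      exact partner_mem hM u
    have e5 : partner hM x = u := partner_eq hM e4
    have e6 : partner hM x = wseq hM hM' v k := by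
      rw [hx]
      exact partner_partner hM _
    have e7 : u = wseq hM hM' v k := e5.symm.trans e6
    exact ih (e7 ▸ h2)

lemma edge_spec_even (hv : partner hM v ≠ partner hM' v) {t : ℕ} (h : Even t) :
    s(yseq hM hM' v t, yseq hM hM' v (t + 1)) ∈ M ∧
      s(yseq hM hM' v t, yseq hM hM' v (t + 1)) ∉ M' := by
  obtain ⟨k, rfl⟩ := h
  rw [show k + k = 2 * k by ring, show 2 * k + 1 = 2 * k + 1 from rfl]
  rw [y_even, y_odd]
  exact ⟨partner_mem hM _, edge_even_notM' hM hM' hv k⟩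

lemma edge_spec_odd (hv : partner hM v ≠ partner hM' v) {t : ℕ} (h : Odd t) :
    s(yseq hM hM' v t, yseq hM hM' v (t + 1)) ∈ M' ∧
      s(yseq hM hM' v t, yseq hM hM' v (t + 1)) ∉ M := by
  have h1 : yseq hM hM' v (t + 1) = partner hM' (yseq hM hM' v t) :=
    yseq_succ_odd hM hM' v h
  constructor
  · rw [h1]
    exact partner_mem hM' _
  · intro hmem
    obtain ⟨k, rfl⟩ := h
    have e1 : partner hM (yseq hM hM' v (2 * k + 1)) = yseq hM hM' v (2 * k + 1 + 1) :=
      partner_eq hM hmem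
    have e2 : partner hM (yseq hM hM' v (2 * k + 1)) = wseq hM hM' v k := by
      rw [y_odd]
      exact partner_partner hM _
    have e3 : yseq hM hM' v (2 * k + 1 + 1) = wseq hM hM' v k := e1.symm.trans e2
    have hM'mem : s(yseq hM hM' v (2 * k + 1), yseq hM hM' v (2 * k + 1 + 1)) ∈ M' := by
      rw [h1]
      exact partner_mem hM' _
    refine edge_even_notM' hM hM' hv k ?_
    rw [Sym2.eq_swap, ← y_odd hM hM' v k, ← e3]
    exact hM'mem


lemma yadj (hv : partner hM v ≠ partner hM' v) (i : ℕ) :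
    G.Adj (yseq hM hM' v i) (yseq hM hM' v (i + 1)) := by
  rcases Nat.even_or_odd i with h | h
  · exact G.mem_edgeSet.mp (hM.1 (edge_spec_even hM hM' hv h).1)
  · exact G.mem_edgeSet.mp (hM'.1 (edge_spec_odd hM hM' hv h).1)

lemma y_ne_cross (hv : partner hM v ≠ partner hM' v) :
    ∀ d i j, j = i + 2 * d + 1 → yseq hM hM' v i ≠ yseq hM hM' v j := by
  intro d
  induction d with
  | zero =>
    intro i j hj h
    rw [show j = i + 1 by omega] at h
    exact (yadj hM hM' hv i).ne h
  | succ d ih =>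
    intro i j hj h
    have key : yseq hM hM' v (i + 1) = yseq hM hM' v (i + 2 * d + 2) := by
      rcases Nat.even_or_odd i with he | ho
      · have hjodd : Odd ((i + 2 * d + 2) + 1) := by
          rw [Nat.odd_iff, Nat.even_iff] at *
          omega
        rw [yseq_succ_even hM hM' v he, ← yseq_pred_odd hM hM' v hjodd]
        congr 1
        rw [show i + 2 * d + 2 + 1 = j by omega]
        exact h
      · have hjeven : Even ((i + 2 * d + 2) + 1) := by
          rw [Nat.even_iff]
          rw [Nat.odd_iff] at ho
          omega
        rw [yseq_succ_odd hM hM' v ho, ← yseq_pred_even hM hM' v hjeven]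
        congr 1
        rw [show i + 2 * d + 2 + 1 = j by omega]
        exact h
    exact ih (i + 1) (i + 2 * d + 2) (by omega) key

lemma y_nodup (hv : partner hM v ≠ partner hM' v) :
    ∀ i j, i < 2 * Function.minimalPeriod (partner hM' ∘ partner hM) v →
      j < 2 * Function.minimalPeriod (partner hM' ∘ partner hM) v →
      yseq hM hM' v i = yseq hM hM' v j → i = j := by
  set T := Function.minimalPeriod (partner hM' ∘ partner hM) v with hT
  have winj : ∀ a b, a < T → b < T → wseq hM hM' v a = wseq hM hM' v b → a = b := by
    intro a b ha hb hw
    exact Function.iterate_injOn_Iio_minimalPeriod (Set.mem_Iio.mpr ha) (Set.mem_Iio.mpr hb) hw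
  have cross : ∀ i j, i < j → (Even i ↔ ¬ Even j) → yseq hM hM' v i ≠ yseq hM hM' v j := by
    intro i j hij hpar
    have : ∃ d, j = i + 2 * d + 1 := by
      refine ⟨(j - i - 1) / 2, ?_⟩
      rw [Nat.even_iff, Nat.even_iff] at hpar
      omega
    obtain ⟨d, hd⟩ := this
    exact y_ne_cross hM hM' hv d i j hd
  intro i j hi hj hy
  rcases Nat.even_or_odd i with hie | hio <;> rcases Nat.even_or_odd j with hje | hjo
  · obtain ⟨a, rfl⟩ := hie
    obtain ⟨b, rfl⟩ := hje
    rw [show a + a = 2 * a by ring, show b + b = 2 * b by ring, y_even, y_even] at hy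
    have := winj a b (by omega) (by omega) hy
    omega
  · rcases Nat.lt_trichotomy i j with hlt | heq | hgt
    · exact absurd hy (cross i j hlt (by
        rw [Nat.even_iff, Nat.even_iff] at *
        rw [Nat.odd_iff] at hjo
        constructor <;> omega))
    · exact heq
    · exact absurd hy.symm (cross j i hgt (by
        rw [Nat.even_iff, Nat.even_iff] at *
        rw [Nat.odd_iff] at hjo
        constructor <;> omega))
  · rcases Nat.lt_trichotomy i j with hlt | heq | hgt
    · exact absurd hy (cross i j hlt (by
        rw [Nat.even_iff, Nat.even_iff] at *
        rw [Nat.odd_iff] at hio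
        constructor <;> omega))
    · exact heq
    · exact absurd hy.symm (cross j i hgt (by
        rw [Nat.even_iff, Nat.even_iff] at *
        rw [Nat.odd_iff] at hio
        constructor <;> omega))
  · obtain ⟨a, rfl⟩ := hio
    obtain ⟨b, rfl⟩ := hjo
    rw [y_odd, y_odd] at hy
    have := winj a b (by omega) (by omega) (partner_injective hM hy)
    omega

lemma two_le_T [Finite V] (hv : partner hM v ≠ partner hM' v) :
    2 ≤ Function.minimalPeriod (partner hM' ∘ partner hM) v := by
  set h := partner hM' ∘ partner hM with hh
  have hinj : Function.Injective h := (partner_injective hM').comp (partner_injective hM)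
  have hper : v ∈ Function.periodicPts h := by
    obtain ⟨a, b, hab, heq⟩ := Finite.exists_ne_map_eq_of_infinite (fun n : ℕ => h^[n] v)
    rw [Function.mem_periodicPts]
    rcases Nat.lt_or_ge a b with hlt | hge
    · refine ⟨b - a, by omega, ?_⟩
      have : h^[a] (h^[b - a] v) = h^[a] v := by
        rw [← Function.iterate_add_apply, show a + (b - a) = b by omega]
        exact heq.symm
      exact hinj.iterate a this
    · have hlt : b < a := by omega
      refine ⟨a - b, by omega, ?_⟩
      have : h^[b] (h^[a - b] v) = h^[b] v := by
        rw [← Function.iterate_add_apply, show b + (a - b) = a by omega]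
        exact heq
      exact hinj.iterate b this
  have hpos : 0 < Function.minimalPeriod h v :=
    Function.minimalPeriod_pos_iff_mem_periodicPts.mpr hper
  by_contra hlt
  have h1 : Function.minimalPeriod h v = 1 := by omega
  have h2 : h v = v := by
    have := Function.iterate_minimalPeriod (f := h) (x := v)
    rwa [h1, Function.iterate_one] at this
  apply hv
  have : partner hM' (partner hM v) = v := h2
  have h3 : partner hM' v = partner hM v := by
    conv_lhs => rw [← this]
    exact partner_partner hM' _
  exact h3.symm

lemma y_period {v : V} :
    yseq hM hM' v (2 * Function.minimalPeriod (partner hM' ∘ partner hM) v) = v := by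
  rw [y_even]
  exact Function.iterate_minimalPeriod

end Backward

noncomputable def bw {G : SimpleGraph V} (y : ℕ → V)
    (hadj : ∀ i, G.Adj (y i) (y (i + 1))) : (k : ℕ) → G.Walk (y 0) (y k)
  | 0 => Walk.nil
  | k + 1 => (bw y hadj k).concat (hadj k)

lemma bw_support {G : SimpleGraph V} (y : ℕ → V)
    (hadj : ∀ i, G.Adj (y i) (y (i + 1))) (k : ℕ) :
    (bw y hadj k).support = (List.range (k + 1)).map y := by
  induction k with
  | zero => simp [bw, List.range_succ]
  | succ k ih =>
    rw [bw, Walk.support_concat, ih]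
    rw [List.range_succ (n := k + 1)]
    simp

lemma bw_edges {G : SimpleGraph V} (y : ℕ → V)
    (hadj : ∀ i, G.Adj (y i) (y (i + 1))) (k : ℕ) :
    (bw y hadj k).edges = (List.range k).map (fun t => s(y t, y (t + 1))) := by
  induction k with
  | zero => simp [bw]
  | succ k ih =>
    rw [bw, Walk.edges_concat, ih]
    rw [List.range_succ (n := k)]
    simp
lemma exists_alt_cycle [Finite V] (hM : IsPM G M) (hM' : IsPM G M') {v : V}
    (hv : partner hM v ≠ partner hM' v) :
    ∃ c : G.Walk v v, IsAltCycle G M c ∧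
      ∀ e ∈ c.edges, (e ∈ M ∧ e ∉ M') ∨ (e ∈ M' ∧ e ∉ M) := by
  set T := Function.minimalPeriod (partner hM' ∘ partner hM) v with hTdef
  have hT2 : 2 ≤ T := two_le_T hM hM' hv
  set y : ℕ → V := yseq hM hM' v with hy
  have hadj : ∀ i, G.Adj (y i) (y (i + 1)) := yadj hM hM' hv
  have h0 : y 0 = v := yseq_zero hM hM' v
  have hend : y (2 * T) = v := y_period hM hM'
  have hnd : ∀ i j, i < 2 * T → j < 2 * T → y i = y j → i = j := y_nodup hM hM' hv
  have hnd' : ∀ i j, i ≤ 2 * T → j ≤ 2 * T → y i = y j →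
      i = j ∨ (i = 0 ∧ j = 2 * T) ∨ (j = 0 ∧ i = 2 * T) := by
    intro i j hi hj hyij
    rcases Nat.lt_or_ge i (2 * T) with hi' | hi'
    · rcases Nat.lt_or_ge j (2 * T) with hj' | hj'
      · exact Or.inl (hnd i j hi' hj' hyij)
      · have hj2 : j = 2 * T := by omega
        have hizero : i = 0 := hnd i 0 hi' (by omega)
          (by rw [hyij, hj2, hend]; exact h0.symm)
        exact Or.inr (Or.inl ⟨hizero, hj2⟩)
    · have hi2 : i = 2 * T := by omega
      rcases Nat.lt_or_ge j (2 * T) with hj' | hj'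
      · have hjzero : j = 0 := hnd j 0 hj' (by omega)
          (by rw [← hyij, hi2, hend]; exact h0.symm)
        exact Or.inr (Or.inr ⟨hjzero, hi2⟩)
      · exact Or.inl (by omega)
  set c : G.Walk v v := (bw y hadj (2 * T)).copy h0 hend with hc
  have hE : c.edges = (List.range (2 * T)).map (fun t => s(y t, y (t + 1))) := by
    rw [hc, Walk.edges_copy, bw_edges]
  have hsup : c.support = (List.range (2 * T + 1)).map y := by
    rw [hc, Walk.support_copy, bw_support]
  have hEmem : ∀ e, e ∈ c.edges ↔ ∃ t, t < 2 * T ∧ e = s(y t, y (t + 1)) := by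
    intro e
    rw [hE, List.mem_map]
    constructor
    · rintro ⟨t, ht, rfl⟩
      exact ⟨t, List.mem_range.mp ht, rfl⟩
    · rintro ⟨t, ht, rfl⟩
      exact ⟨t, List.mem_range.mpr ht, rfl⟩
  have hcyc : c.IsCycle := by
    refine ⟨⟨⟨?_⟩, ?_⟩, ?_⟩
    · rw [hE]
      refine List.Nodup.map_on ?_ (List.nodup_range)
      intro a ha b hb heq
      rw [List.mem_range] at ha hb
      rcases Sym2.eq_iff.mp heq with ⟨h1, h2⟩ | ⟨h1, h2⟩
      · exact hnd a b ha hb h1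
      · have r1 := hnd' a (b + 1) (by omega) (by omega) h1
        have r2 := hnd' (a + 1) b (by omega) (by omega) h2
        omega
    · intro hnil
      have hlen : c.edges.length = 2 * T := by
        rw [hE]
        simp
      rw [hnil] at hlen
      simp at hlen
      omega
    · have htail : c.support.tail = (List.range (2 * T)).map (fun t => y (t + 1)) := by
        rw [hsup, List.range_succ_eq_map, List.map_cons, List.tail_cons, List.map_map]
        rfl
      rw [htail]
      refine List.Nodup.map_on ?_ (List.nodup_range)
      intro a ha b hb heq
      rw [List.mem_range] at ha hb
      have := hnd' (a + 1) (b + 1) (by omega) (by omega) heq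
      omega
  refine ⟨c, ⟨hcyc, ?_⟩, ?_⟩
  · intro u hu
    rw [hsup, List.mem_map] at hu
    obtain ⟨i0, hi0, rfl⟩ := hu
    rw [List.mem_range] at hi0
    obtain ⟨i, hi, hyi⟩ : ∃ i, i < 2 * T ∧ y i = y i0 := by
      rcases Nat.lt_or_ge i0 (2 * T) with h | h
      · exact ⟨i0, h, rfl⟩
      · have : i0 = 2 * T := by omega
        exact ⟨0, by omega, by rw [this, hend]; exact h0⟩
    rw [← hyi]
    rcases Nat.even_or_odd i with hie | hio
    · refine ⟨s(y i, y (i + 1)), ⟨(hEmem _).mpr ⟨i, hi, rfl⟩,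
        (edge_spec_even hM hM' hv hie).1, Sym2.mem_mk_left _ _⟩, ?_⟩
      rintro e ⟨hec, heM, hue⟩
      obtain ⟨t, ht, rfl⟩ := (hEmem e).mp hec
      have hte : Even t := by
        by_contra hodd
        exact (edge_spec_odd hM hM' hv (Nat.not_even_iff_odd.mp hodd)).2 heM
      rcases Sym2.mem_iff'.mp hue with h1 | h1
      · have hit : i = t := hnd i t hi ht h1
        rw [hit]
      · have := hnd' i (t + 1) (by omega) (by omega) h1
        rw [Nat.even_iff] at hie hte
        omega
    · obtain ⟨k, rfl⟩ := hio
      refine ⟨s(y (2 * k), y (2 * k + 1)), ⟨(hEmem _).mpr ⟨2 * k, by omega, rfl⟩,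
        (edge_spec_even hM hM' hv (even_two_mul k)).1, Sym2.mem_mk_right _ _⟩, ?_⟩
      rintro e ⟨hec, heM, hue⟩
      obtain ⟨t, ht, rfl⟩ := (hEmem e).mp hec
      have hte : Even t := by
        by_contra hodd
        exact (edge_spec_odd hM hM' hv (Nat.not_even_iff_odd.mp hodd)).2 heM
      rcases Sym2.mem_iff'.mp hue with h1 | h1
      · have := hnd (2 * k + 1) t hi ht h1
        rw [Nat.even_iff] at hte
        omega
      · have := hnd' (2 * k + 1) (t + 1) (by omega) (by omega) h1
        have ht2 : t = 2 * k := by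
          rw [Nat.even_iff] at hte
          omega
        rw [ht2]
  · intro e hec
    obtain ⟨t, ht, rfl⟩ := (hEmem e).mp hec
    rcases Nat.even_or_odd t with h | h
    · exact Or.inl (edge_spec_even hM hM' hv h)
    · exact Or.inr (edge_spec_odd hM hM' hv h)

end ForcingAux

theorem stmt0 [Fintype V] (G : SimpleGraph V) (M S : Set (Sym2 V))
    (hM : IsPM G M) (hS : S ⊆ M) :
    IsForcingSet G M S ↔
      ∀ (v : V) (c : G.Walk v v), IsAltCycle G M c → ∃ e ∈ S, e ∈ c.edges := by
  constructor
  · intro hf v c hc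
    exact ForcingAux.forcing_hits hM hS hf c hc
  · intro h
    refine ⟨hS, fun M' hM' hSM' => ?_⟩
    by_contra hne
    have hdiff : ∃ e, (e ∈ M ∧ e ∉ M') ∨ (e ∈ M' ∧ e ∉ M) := by
      by_contra h'
      push_neg at h'
      apply hne
      ext e
      exact ⟨(h' e).2, (h' e).1⟩
    obtain ⟨e, he⟩ := hdiff
    have hv : ∃ a : V, ForcingAux.partner hM a ≠ ForcingAux.partner hM' a := by
      revert he
      induction e using Sym2.ind with
      | _ a b =>
        rintro (⟨h1, h2⟩ | ⟨h1, h2⟩)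
        · refine ⟨a, fun heq => h2 ?_⟩
          have hmm := ForcingAux.partner_mem hM' a
          rw [← heq, ForcingAux.partner_eq hM h1] at hmm
          exact hmm
        · refine ⟨a, fun heq => h2 ?_⟩
          have hmm := ForcingAux.partner_mem hM a
          rw [heq, ForcingAux.partner_eq hM' h1] at hmm
          exact hmm
    obtain ⟨a, ha⟩ := hv
    obtain ⟨c, hc, hcdiff⟩ := ForcingAux.exists_alt_cycle hM hM' ha
    obtain ⟨e', he'S, he'c⟩ := h a c hc
    rcases hcdiff e' he'c with ⟨-, h2⟩ | ⟨-, h2⟩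
    · exact h2 (hSM' he'S)
    · exact h2 (hS he'S)
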